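/- The superalgebra AK(1) with even basis (ε_n)_{n∈ℤ}, odd basis (a_i)_{i∈ℤ+1/2}, and products ε_n·ε_m = ε_{n+m}, ε_n·a_i = (1/2)a_{n+i}, a_i·a_j = (1/2)(j-i)ε_{i+j}, is a Lie antialgebra. -/

import Mathlib

noncomputable section AKaux

abbrev AAA := AddMonoidAlgebra ℂ ℤ

abbrev sg (n : ℤ) (c : ℂ) : AAA := AddMonoidAlgebra.single n c

lemma sg_mul (n m : ℤ) (c d : ℂ) : sg n c * sg m d = sg (n + m) (c * d) :=
  AddMonoidAlgebra.single_mul_single ..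

lemma sg_smul (c : ℂ) (n : ℤ) (d : ℂ) : c • sg n d = sg n (c * d) :=
  AddMonoidAlgebra.smul_single' c n d

lemma sg_sub (n : ℤ) (c d : ℂ) : sg n c - sg n d = sg n (c - d) :=
  (AddMonoidAlgebra.single_sub n c d).symm

def D : AAA →ₗ[ℂ] AAA :=
  (AddMonoidAlgebra.coeffLinearEquiv ℂ : AAA ≃ₗ[ℂ] (ℤ →₀ ℂ)).symm.toLinearMap ∘ₗ
    Finsupp.lsum ℂ (fun n : ℤ => (n : ℂ) • Finsupp.lsingle (R := ℂ) (M := ℂ) n) ∘ₗ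
    (AddMonoidAlgebra.coeffLinearEquiv ℂ : AAA ≃ₗ[ℂ] (ℤ →₀ ℂ)).toLinearMap

lemma D_sg (n : ℤ) (c : ℂ) : D (sg n c) = sg n ((n : ℂ) * c) := by
  show AddMonoidAlgebra.ofCoeff (Finsupp.lsum ℂ (fun n : ℤ => (n : ℂ) • Finsupp.lsingle (R := ℂ) (M := ℂ) n)
    (Finsupp.single n c)) = _
  rw [Finsupp.lsum_single, LinearMap.smul_apply, Finsupp.lsingle_apply, Finsupp.smul_single',
    AddMonoidAlgebra.ofCoeff_single]

lemma smul_eq (c : ℂ) (x : AAA) : c • x = sg 0 c * x := by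
  rw [Algebra.smul_def]
  congr 1

lemma leibniz (f g : AAA) : D (f * g) = D f * g + f * D g := by
  induction f using AddMonoidAlgebra.induction_linear with
  | zero => simp
  | add f1 f2 h1 h2 =>
      rw [add_mul, map_add, h1, h2]
      simp only [map_add, add_mul, mul_add]
      abel
  | single n c =>
      induction g using AddMonoidAlgebra.induction_linear with
      | zero => simp
      | add g1 g2 h1 h2 =>
          rw [mul_add, map_add, h1, h2]
          simp only [map_add, add_mul, mul_add]
          abel
      | single m d =>
          rw [sg_mul, D_sg, D_sg, D_sg, sg_mul, sg_mul, ← AddMonoidAlgebra.single_add]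
          congr 1
          push_cast
          ring

lemma mulEE (f g : ℤ →₀ ℂ) :
    (f.sum fun n c => g.sum fun m d => Finsupp.single (n + m) (c * d))
      = (AddMonoidAlgebra.ofCoeff f * AddMonoidAlgebra.ofCoeff g : AAA).coeff := by
  simp only [AddMonoidAlgebra.mul_def, AddMonoidAlgebra.coeff_finsuppSum,
    AddMonoidAlgebra.coeff_single, AddMonoidAlgebra.coeff_ofCoeff]

lemma mulEO (f g : ℤ →₀ ℂ) :
    (f.sum fun n c => g.sum fun m d => Finsupp.single (n + m) ((1/2 : ℂ) * (c * d)))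
      = ((1/2 : ℂ) • (AddMonoidAlgebra.ofCoeff f * AddMonoidAlgebra.ofCoeff g : AAA)).coeff := by
  rw [AddMonoidAlgebra.coeff_smul, ← mulEE]
  simp only [Finsupp.smul_sum, Finsupp.smul_single']

lemma innerOO (n : ℤ) (c : ℂ) (g : ℤ →₀ ℂ) :
    (g.sum fun m d => Finsupp.single (n + m + 1) ((1/2 : ℂ) * ((m : ℂ) - (n : ℂ)) * (c * d)))
      = ((1/2 : ℂ) • (sg 1 1 * (sg n c * D (AddMonoidAlgebra.ofCoeff g)
          - sg n ((n : ℂ) * c) * AddMonoidAlgebra.ofCoeff g))).coeff := by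
  induction g using Finsupp.induction_linear with
  | zero => simp
  | add g1 g2 h1 h2 =>
      rw [Finsupp.sum_add_index (by simp) (by intros a _ b1 b2; rw [← Finsupp.single_add]; ring_nf),
        h1, h2, AddMonoidAlgebra.ofCoeff_add, ← AddMonoidAlgebra.coeff_add, map_add, ← smul_add]
      congr 2
      ring
  | single m d =>
      rw [Finsupp.sum_single_index (by simp), AddMonoidAlgebra.ofCoeff_single, D_sg, sg_mul, sg_mul,
        sg_sub, sg_mul, sg_smul, AddMonoidAlgebra.coeff_single]
      congr 1
      · ring
      · ring

lemma mulOO (f g : ℤ →₀ ℂ) :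
    (f.sum fun n c => g.sum fun m d =>
        Finsupp.single (n + m + 1) ((1/2 : ℂ) * ((m : ℂ) - (n : ℂ)) * (c * d)))
      = ((1/2 : ℂ) • (sg 1 1 * (AddMonoidAlgebra.ofCoeff f * D (AddMonoidAlgebra.ofCoeff g)
          - D (AddMonoidAlgebra.ofCoeff f) * AddMonoidAlgebra.ofCoeff g))).coeff := by
  induction f using Finsupp.induction_linear with
  | zero => simp
  | add f1 f2 h1 h2 =>
      rw [Finsupp.sum_add_index
        (by intros; simp)
        (by intros a _ b1 b2; rw [← Finsupp.sum_add]; congr 1; funext m d;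
            rw [← Finsupp.single_add]; ring_nf),
        h1, h2, AddMonoidAlgebra.ofCoeff_add, ← AddMonoidAlgebra.coeff_add, map_add, ← smul_add]
      congr 2
      ring
  | single n c =>
      rw [Finsupp.sum_single_index (by simp), innerOO, AddMonoidAlgebra.ofCoeff_single, D_sg]

end AKaux

/-- The parity grading on `A × A`: `A × 0` is the even part, `0 × A` the odd part. -/
def evenodd (A : Type*) [AddCommGroup A] [Module ℂ A] (i : ZMod 2) :
    Submodule ℂ (A × A) :=
  if i = 0 then (⊤ : Submodule ℂ A).prod ⊥ else (⊥ : Submodule ℂ A).prod ⊤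

/-- The product of `AK(1)`.  The even part has basis `ε_n` (`n ∈ ℤ`), modeled by
`Finsupp.single n 1` in the first component; the odd part has basis `a_i`
(`i ∈ ℤ + 1/2`), where `a_{n+1/2}` is modeled by `Finsupp.single n 1` in the second
component.  The products are `ε_n·ε_m = ε_{n+m}`, `ε_n·a_i = (1/2)a_{n+i}`,
`a_i·a_j = (1/2)(j-i)ε_{i+j}`. -/
noncomputable def akMul (u v : (ℤ →₀ ℂ) × (ℤ →₀ ℂ)) : (ℤ →₀ ℂ) × (ℤ →₀ ℂ) :=
  (u.1.sum (fun n c => v.1.sum fun m d => Finsupp.single (n + m) (c * d))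
     + u.2.sum (fun n c => v.2.sum fun m d =>
         Finsupp.single (n + m + 1) ((1/2 : ℂ) * ((m : ℂ) - (n : ℂ)) * (c * d))),
   u.1.sum (fun n c => v.2.sum fun m d => Finsupp.single (n + m) ((1/2 : ℂ) * (c * d)))
     + u.2.sum (fun n c => v.1.sum fun m d => Finsupp.single (n + m) ((1/2 : ℂ) * (c * d))))

noncomputable section AKaux2

lemma akMul_eq (f g f' g' : ℤ →₀ ℂ) :
    akMul (f, g) (f', g') =
      ((AddMonoidAlgebra.ofCoeff f * AddMonoidAlgebra.ofCoeff f' + (1/2 : ℂ) • (sg 1 1 *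
        (AddMonoidAlgebra.ofCoeff g * D (AddMonoidAlgebra.ofCoeff g')
          - D (AddMonoidAlgebra.ofCoeff g) * AddMonoidAlgebra.ofCoeff g')) : AAA).coeff,
       ((1/2 : ℂ) • (AddMonoidAlgebra.ofCoeff f * AddMonoidAlgebra.ofCoeff g')
         + (1/2 : ℂ) • (AddMonoidAlgebra.ofCoeff g * AddMonoidAlgebra.ofCoeff f') : AAA).coeff) := by
  unfold akMul
  dsimp only
  rw [Prod.mk.injEq]
  constructor
  · rw [mulEE, mulOO, AddMonoidAlgebra.coeff_add]
  · rw [mulEO, mulEO, AddMonoidAlgebra.coeff_add]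

lemma mem0 {u : (ℤ →₀ ℂ) × (ℤ →₀ ℂ)} : u ∈ evenodd (ℤ →₀ ℂ) 0 ↔ u.2 = 0 := by
  simp [evenodd, Submodule.mem_prod]

lemma mem1 {u : (ℤ →₀ ℂ) × (ℤ →₀ ℂ)} : u ∈ evenodd (ℤ →₀ ℂ) 1 ↔ u.1 = 0 := by
  simp [evenodd, Submodule.mem_prod, Submodule.mem_bot]

lemma zmodcases (i : ZMod 2) : i = 0 ∨ i = 1 := by
  fin_cases i <;> [exact Or.inl rfl; exact Or.inr rfl]

end AKaux2

set_option linter.unreachableTactic false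
set_option linter.unusedTactic false

/-- `AK(1)` is a Lie antialgebra: its product respects the grading, is
supercommutative, and satisfies (LA0)-(LA3). -/
theorem stmt_4 :
    (∀ (i j : ZMod 2) (u v : (ℤ →₀ ℂ) × (ℤ →₀ ℂ)),
        u ∈ evenodd (ℤ →₀ ℂ) i → v ∈ evenodd (ℤ →₀ ℂ) j →
        akMul u v ∈ evenodd (ℤ →₀ ℂ) (i + j)) ∧
    (∀ (i j : ZMod 2) (u v : (ℤ →₀ ℂ) × (ℤ →₀ ℂ)),
        u ∈ evenodd (ℤ →₀ ℂ) i → v ∈ evenodd (ℤ →₀ ℂ) j →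
        akMul u v = ((-1 : ℂ) ^ (i.val * j.val)) • akMul v u) ∧
    (∀ x1 x2 x3, x1 ∈ evenodd (ℤ →₀ ℂ) 0 → x2 ∈ evenodd (ℤ →₀ ℂ) 0 →
        x3 ∈ evenodd (ℤ →₀ ℂ) 0 →
        akMul x1 (akMul x2 x3) = akMul (akMul x1 x2) x3) ∧
    (∀ x1 x2 y, x1 ∈ evenodd (ℤ →₀ ℂ) 0 → x2 ∈ evenodd (ℤ →₀ ℂ) 0 →
        y ∈ evenodd (ℤ →₀ ℂ) 1 →
        akMul x1 (akMul x2 y) = (1/2 : ℂ) • akMul (akMul x1 x2) y) ∧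
    (∀ x y1 y2, x ∈ evenodd (ℤ →₀ ℂ) 0 → y1 ∈ evenodd (ℤ →₀ ℂ) 1 →
        y2 ∈ evenodd (ℤ →₀ ℂ) 1 →
        akMul x (akMul y1 y2) = akMul (akMul x y1) y2 + akMul y1 (akMul x y2)) ∧
    (∀ y1 y2 y3, y1 ∈ evenodd (ℤ →₀ ℂ) 1 → y2 ∈ evenodd (ℤ →₀ ℂ) 1 →
        y3 ∈ evenodd (ℤ →₀ ℂ) 1 →
        akMul y1 (akMul y2 y3) + akMul y2 (akMul y3 y1) + akMul y3 (akMul y1 y2) = 0) := by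
  refine ⟨?_, ?_, ?_, ?_, ?_, ?_⟩
  · -- grading
    rintro i j ⟨u1, u2⟩ ⟨v1, v2⟩ hu hv
    rcases zmodcases i with rfl | rfl <;> rcases zmodcases j with rfl | rfl <;>
      [skip; skip; skip; rw [show ((1 : ZMod 2) + 1) = 0 from rfl]] <;>
      simp only [mem0, mem1, zero_add, add_zero] at hu hv ⊢ <;> subst hu hv <;>
      rw [akMul_eq] <;>
      simp
  · -- supercommutativity
    rintro i j ⟨u1, u2⟩ ⟨v1, v2⟩ hu hv
    rcases zmodcases i with rfl | rfl <;> rcases zmodcases j with rfl | rfl <;>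
      simp only [mem0, mem1] at hu hv <;> subst hu hv <;>
      rw [akMul_eq, akMul_eq] <;>
      norm_num [ZMod.val_one, Prod.smul_mk, Prod.mk.injEq, smul_eq, ← AddMonoidAlgebra.coeff_smul, ← AddMonoidAlgebra.coeff_neg, AddMonoidAlgebra.ofCoeff_coeff, AddMonoidAlgebra.ofCoeff_zero, ← AddMonoidAlgebra.coeff_add, AddMonoidAlgebra.coeff_inj, AddMonoidAlgebra.coeff_eq_zero, true_and, and_true] <;>
      (try constructor) <;> (first | rfl | ring1 | ring_nf)
  · -- LA0
    rintro ⟨f1, g1⟩ ⟨f2, g2⟩ ⟨f3, g3⟩ h1 h2 h3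
    simp only [mem0] at h1 h2 h3; subst h1 h2 h3
    repeat rw [akMul_eq]
    simp only [map_zero, mul_zero, zero_mul, sub_zero, zero_sub, smul_zero,
      add_zero, zero_add, neg_zero, map_add, map_smul, leibniz, D_sg, Int.cast_zero,
      Int.cast_one, Finsupp.single_zero, smul_eq, Prod.mk.injEq, AddMonoidAlgebra.ofCoeff_coeff, AddMonoidAlgebra.ofCoeff_zero, ← AddMonoidAlgebra.coeff_add, AddMonoidAlgebra.coeff_inj, AddMonoidAlgebra.coeff_eq_zero, true_and, and_true]
    (try constructor) <;> (first | rfl | ring1 | ring_nf)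
  · -- LA1
    rintro ⟨f1, g1⟩ ⟨f2, g2⟩ ⟨fy, gy⟩ h1 h2 hy
    simp only [mem0, mem1] at h1 h2 hy; subst h1 h2 hy
    repeat rw [akMul_eq]
    simp only [map_zero, mul_zero, zero_mul, sub_zero, zero_sub, smul_zero,
      add_zero, zero_add, neg_zero, map_add, map_smul, leibniz, D_sg, Int.cast_zero,
      Int.cast_one, Finsupp.single_zero, smul_eq, Prod.smul_mk, ← AddMonoidAlgebra.coeff_smul, Prod.mk.injEq, AddMonoidAlgebra.ofCoeff_coeff, AddMonoidAlgebra.ofCoeff_zero, ← AddMonoidAlgebra.coeff_add, AddMonoidAlgebra.coeff_inj, AddMonoidAlgebra.coeff_eq_zero, true_and, and_true]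
    (try constructor) <;> (first | rfl | ring1 | ring_nf)
  · -- LA2
    rintro ⟨f, g⟩ ⟨a1, b1⟩ ⟨a2, b2⟩ hx h1 h2
    simp only [mem0, mem1] at hx h1 h2; subst hx h1 h2
    repeat rw [akMul_eq]
    simp only [map_zero, mul_zero, zero_mul, sub_zero, zero_sub, smul_zero,
      add_zero, zero_add, neg_zero, map_add, map_smul, leibniz, D_sg, Int.cast_zero,
      Int.cast_one, Finsupp.single_zero, smul_eq, Prod.mk.injEq, Prod.mk_add_mk, AddMonoidAlgebra.ofCoeff_coeff, AddMonoidAlgebra.ofCoeff_zero, ← AddMonoidAlgebra.coeff_add, AddMonoidAlgebra.coeff_inj, AddMonoidAlgebra.coeff_eq_zero]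
    have h : sg 0 (1/2 : ℂ) * sg 0 (1/2 : ℂ) * 2 = sg 0 (1/2 : ℂ) := by
      rw [sg_mul, show (2 : AAA) = sg 0 2 by
        rw [show (2 : AAA) = (2 : ℂ) • (1 : AAA) by
          rw [two_smul ℂ (1 : AAA), one_add_one_eq_two], AddMonoidAlgebra.one_def, sg_smul]
        norm_num, sg_mul]
      norm_num
    generalize AddMonoidAlgebra.ofCoeff f = F
    generalize AddMonoidAlgebra.ofCoeff b1 = B1
    generalize AddMonoidAlgebra.ofCoeff b2 = B2
    constructor
    · linear_combination (-(F * sg 1 1 * B1 * D B2 - F * sg 1 1 * D B1 * B2)) * h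
    · trivial
  · -- LA3
    rintro ⟨a1, b1⟩ ⟨a2, b2⟩ ⟨a3, b3⟩ h1 h2 h3
    simp only [mem1] at h1 h2 h3; subst h1 h2 h3
    repeat rw [akMul_eq]
    simp only [map_zero, mul_zero, zero_mul, sub_zero, zero_sub, smul_zero,
      add_zero, zero_add, neg_zero, map_add, map_smul, leibniz, D_sg, Int.cast_zero,
      Int.cast_one, Finsupp.single_zero, smul_eq, Prod.mk.injEq, Prod.mk_add_mk,
      Prod.mk_eq_zero, AddMonoidAlgebra.ofCoeff_coeff, AddMonoidAlgebra.ofCoeff_zero, ← AddMonoidAlgebra.coeff_add, AddMonoidAlgebra.coeff_inj, AddMonoidAlgebra.coeff_eq_zero, true_and, and_true]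
    (try constructor) <;> (first | rfl | ring1 | ring_nf)
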